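/- Let n ≥ 4 be even. Let T be the caterpillar with spine x_1,...,x_{n-1} where each spine edge (x_i, x_{i+1}) has weight 2, leaves v_i and u_i attached to x_i with weight-n edges for 1 ≤ i ≤ n−1, and leaf v_n attached to x_{n/2} with a weight-1 edge. Then PCG(T, 2n−2, 2n+2) equals the graph C_n ⊠ P_2 with the vertex u_n removed. -/

import Mathlib

open SimpleGraph

/-- A tree with positive real edge weights. -/
structure WTree (α : Type) where
  g : SimpleGraph α
  isTree : g.IsTree
  w : α → α → ℝ
  w_symm : ∀ a b, w a b = w b a
  w_pos : ∀ a b, g.Adj a b → 0 < w a b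

/-- The weighted distance between two vertices of a weighted tree: the sum of
the weights of the edges on the unique path between them. -/
noncomputable def WTree.dist {α : Type} (T : WTree α) (u v : α) : ℝ :=
  (((T.isTree.existsUnique_path u v).exists.choose).darts.map
    (fun d => T.w d.toProd.1 d.toProd.2)).sum

/-- A vertex of a weighted tree is a leaf if it has exactly one neighbor. -/
def WTree.IsLeaf {α : Type} (T : WTree α) (v : α) : Prop :=
  ∃! u, T.g.Adj v u

/-- `G = PCG(T, dmin, dmax)` via the leaf-assignment `f`. -/
def IsPCGWith {V β : Type} (G : SimpleGraph V) (T : WTree β) (f : V → β)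
    (dmin dmax : ℝ) : Prop :=
  Function.Injective f ∧ (∀ v, T.IsLeaf (f v)) ∧ (∀ b, T.IsLeaf b → ∃ v, f v = b) ∧
    ∀ u v : V, u ≠ v →
      (G.Adj u v ↔ dmin ≤ T.dist (f u) (f v) ∧ T.dist (f u) (f v) ≤ dmax)

/-- A graph is a pairwise compatibility graph. -/
def IsPCG {V : Type} (G : SimpleGraph V) : Prop :=
  ∃ (β : Type) (T : WTree β) (f : V → β) (dmin dmax : ℝ),
    0 ≤ dmin ∧ dmin ≤ dmax ∧ IsPCGWith G T f dmin dmax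

/-- The strong product `C_n ⊠ P_2`: vertices `(i, s)` with `s : Fin 2`
(`u_i = (i, 0)`, `v_i = (i, 1)`), adjacent iff distinct and the first
coordinates are equal or consecutive modulo `n`. -/
def strongProdC2 (n : ℕ) : SimpleGraph (Fin n × Fin 2) where
  Adj x y := x ≠ y ∧ (x.1 = y.1 ∨ (x.1.val + 1) % n = y.1.val ∨
    (y.1.val + 1) % n = x.1.val)
  symm := by
    constructor
    rintro x y ⟨hne, h⟩
    refine ⟨hne.symm, ?_⟩
    rcases h with h | h | h
    · exact Or.inl h.symm
    · exact Or.inr (Or.inr h)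
    · exact Or.inr (Or.inl h)
  loopless := ⟨fun x h => h.1 rfl⟩

/-- Vertices of the caterpillar for even `n`: spine nodes `x_{i+1} = .inl i`,
leaves `u_{i+1} = .inr (.inl i)`, `v_{i+1} = .inr (.inr (.inl i))` for
`i : Fin (n-1)`, and the extra leaf `v_n = .inr (.inr (.inr ()))`. -/
abbrev CatVE (n : ℕ) := Fin (n - 1) ⊕ (Fin (n - 1) ⊕ (Fin (n - 1) ⊕ Unit))

/-- Edges of the caterpillar (even case): consecutive spine nodes, each `u_i`
and `v_i` attached to `x_i`, and `v_n` attached to `x_{n/2}`. -/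
def catRelE (n : ℕ) : CatVE n → CatVE n → Prop := fun a b =>
  match a, b with
  | .inl i, .inl j => i.val + 1 = j.val
  | .inr (.inl i), .inl j => i = j
  | .inr (.inr (.inl i)), .inl j => i = j
  | .inr (.inr (.inr _)), .inl j => j.val + 1 = n / 2
  | _, _ => False

/-- The caterpillar tree graph for the even case. -/
def catGraphE (n : ℕ) : SimpleGraph (CatVE n) := SimpleGraph.fromRel (catRelE n)

/-- Edge weights for the even caterpillar: spine edges weigh `2`, the edge to
`v_n` weighs `1`, and the edges to the leaves `u_i, v_i` weigh `n`. -/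
def catWE (n : ℕ) : CatVE n → CatVE n → ℝ := fun a b =>
  match a, b with
  | .inl _, .inl _ => 2
  | .inr (.inr (.inr _)), _ => 1
  | _, .inr (.inr (.inr _)) => 1
  | _, _ => (n : ℝ)

/-- The assignment of the vertices of `C_n ⊠ P_2` (minus `u_n`) to the leaves
of the even caterpillar: `u_{i+1} = (i,0) ↦ .inr (.inl i)`,
`v_{i+1} = (i,1) ↦ .inr (.inr (.inl i))` for `i < n-1`, and
`v_n = (n-1,1) ↦ .inr (.inr (.inr ()))`. -/
def leafMapE (n : ℕ) : Fin n × Fin 2 → CatVE n := fun p =>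
  if h : p.1.val < n - 1 then
    if p.2 = 0 then .inr (.inl ⟨p.1.val, h⟩) else .inr (.inr (.inl ⟨p.1.val, h⟩))
  else .inr (.inr (.inr ()))

section Aux
variable {n : ℕ}

lemma catWE_symm (n : ℕ) (a b : CatVE n) : catWE n a b = catWE n b a := by
  rcases a with i | i | i | i <;> rcases b with j | j | j | j <;> rfl

lemma cat_adj_iff (n : ℕ) (a b : CatVE n) :
    (catGraphE n).Adj a b ↔ a ≠ b ∧ (catRelE n a b ∨ catRelE n b a) := Iff.rfl

lemma adj_spine (i j : ℕ) (hi : i < n - 1) (hj : j < n - 1) (h : i + 1 = j) :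
    (catGraphE n).Adj (.inl ⟨i, hi⟩) (.inl ⟨j, hj⟩) := by
  refine ⟨?_, Or.inl ?_⟩
  · simp only [ne_eq, Sum.inl.injEq, Fin.mk.injEq]; omega
  · simpa [catRelE] using h

lemma adj_U (i : ℕ) (hi : i < n - 1) :
    (catGraphE n).Adj (.inr (.inl ⟨i, hi⟩)) (.inl ⟨i, hi⟩) := by
  exact ⟨by simp, Or.inl (by simp [catRelE])⟩

lemma adj_V (i : ℕ) (hi : i < n - 1) :
    (catGraphE n).Adj (.inr (.inr (.inl ⟨i, hi⟩))) (.inl ⟨i, hi⟩) := by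
  exact ⟨by simp, Or.inl (by simp [catRelE])⟩

lemma adj_W (hn : 4 ≤ n) (h : n / 2 - 1 < n - 1) :
    (catGraphE n).Adj (.inr (.inr (.inr ()))) (.inl ⟨n / 2 - 1, h⟩) := by
  refine ⟨by simp, Or.inl ?_⟩
  simp only [catRelE]
  omega

/-- The spine walk from `x_{i+1}` to `x_{j+1}`. -/
def spineW (n : ℕ) : (i j : ℕ) → (hj : j < n - 1) → (hij : i ≤ j) →
    (catGraphE n).Walk (Sum.inl ⟨i, by omega⟩) (Sum.inl ⟨j, hj⟩)
  | i, j, hj, hij =>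
    if h : i = j then
      (SimpleGraph.Walk.nil' (Sum.inl ⟨i, by omega⟩)).copy rfl (by subst h; rfl)
    else
      SimpleGraph.Walk.cons (adj_spine i (i + 1) (by omega) (by omega) rfl)
        (spineW n (i + 1) j hj (by omega))
  termination_by i j => j - i

lemma spineW_support (m : ℕ) : ∀ (i j : ℕ) (hj : j < n - 1) (hij : i ≤ j), j - i = m →
    ∀ a ∈ (spineW n i j hj hij).support,
      ∃ k, ∃ h : k < n - 1, a = Sum.inl ⟨k, h⟩ ∧ i ≤ k ∧ k ≤ j := by
  induction m with
  | zero =>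
    intro i j hj hij hm a ha
    have : i = j := by omega
    subst this
    rw [spineW, dif_pos rfl] at ha
    simp only [SimpleGraph.Walk.support_copy, SimpleGraph.Walk.support_nil,
      List.mem_singleton] at ha
    exact ⟨i, by omega, ha, le_refl _, le_refl _⟩
  | succ m ih =>
    intro i j hj hij hm a ha
    rw [spineW, dif_neg (by omega)] at ha
    simp only [SimpleGraph.Walk.support_cons, List.mem_cons] at ha
    rcases ha with ha | ha
    · exact ⟨i, by omega, ha, le_refl _, hij⟩
    · obtain ⟨k, h, hk, h1, h2⟩ := ih (i + 1) j hj (by omega) (by omega) a ha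
      exact ⟨k, h, hk, by omega, h2⟩

lemma spineW_isPath (m : ℕ) : ∀ (i j : ℕ) (hj : j < n - 1) (hij : i ≤ j), j - i = m →
    (spineW n i j hj hij).IsPath := by
  induction m with
  | zero =>
    intro i j hj hij hm
    have : i = j := by omega
    subst this
    rw [spineW, dif_pos rfl]
    simp
  | succ m ih =>
    intro i j hj hij hm
    rw [spineW, dif_neg (by omega)]
    refine SimpleGraph.Walk.IsPath.cons (ih (i + 1) j hj (by omega) (by omega)) ?_
    intro hmem
    obtain ⟨k, h, hk, h1, h2⟩ := spineW_support m (i + 1) j hj (by omega) (by omega) _ hmem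
    simp only [Sum.inl.injEq, Fin.mk.injEq] at hk
    omega

lemma spineW_weight (m : ℕ) : ∀ (i j : ℕ) (hj : j < n - 1) (hij : i ≤ j), j - i = m →
    ((spineW n i j hj hij).darts.map (fun d => catWE n d.toProd.1 d.toProd.2)).sum
      = 2 * ((j - i : ℕ) : ℝ) := by
  induction m with
  | zero =>
    intro i j hj hij hm
    have : i = j := by omega
    subst this
    rw [spineW, dif_pos rfl]
    simp
  | succ m ih =>
    intro i j hj hij hm
    rw [spineW, dif_neg (by omega)]
    simp only [SimpleGraph.Walk.darts_cons, List.map_cons, List.sum_cons,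
      ih (i + 1) j hj (by omega) (by omega)]
    have : catWE n (Sum.inl ⟨i, by omega⟩ : CatVE n) (Sum.inl ⟨i + 1, by omega⟩) = 2 := rfl
    rw [this]
    have h1 : (j - i : ℕ) = (j - (i+1) : ℕ) + 1 := by omega
    rw [h1]
    push_cast
    ring

end Aux
section Aux2
variable {n : ℕ}

lemma dist_eq_of_path {α : Type} (T : WTree α) {u v : α} (p : T.g.Walk u v) (hp : p.IsPath) :
    T.dist u v = (p.darts.map (fun d => T.w d.toProd.1 d.toProd.2)).sum := by
  have h := T.isTree.existsUnique_path u v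
  rw [WTree.dist, h.unique h.exists.choose_spec hp]

lemma wtree_dist_symm {α : Type} (T : WTree α) (u v : α) : T.dist u v = T.dist v u := by
  have h := T.isTree.existsUnique_path u v
  have hp := h.exists.choose_spec
  rw [dist_eq_of_path T _ hp, dist_eq_of_path T _ hp.reverse,
    SimpleGraph.Walk.darts_reverse, List.map_reverse, List.sum_reverse, List.map_map]
  congr 1
  refine List.map_congr_left fun d _ => ?_
  simp [T.w_symm]

lemma dist_leaves (T : WTree (CatVE n)) (hg : T.g = catGraphE n) (hw : T.w = catWE n)
    (a b : CatVE n) (s t : ℕ) (hs : s < n - 1) (ht : t < n - 1) (hst : s ≤ t)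
    (ha : (catGraphE n).Adj a (.inl ⟨s, hs⟩)) (hb : (catGraphE n).Adj (.inl ⟨t, ht⟩) b)
    (ha' : ∀ x : Fin (n - 1), a ≠ Sum.inl x) (hb' : ∀ x : Fin (n - 1), b ≠ Sum.inl x)
    (hab : a ≠ b) :
    T.dist a b = catWE n a (.inl ⟨s, hs⟩) + catWE n (.inl ⟨t, ht⟩) b + 2 * ((t - s : ℕ) : ℝ) := by
  obtain ⟨g, hT, w, h1, h2⟩ := T
  replace hg : g = catGraphE n := hg
  replace hw : w = catWE n := hw
  subst hg hw
  set p : (catGraphE n).Walk a b :=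
    SimpleGraph.Walk.cons ha ((spineW n s t ht hst).concat hb) with hp
  have hpath : p.IsPath := by
    rw [SimpleGraph.Walk.isPath_def, hp]
    rw [SimpleGraph.Walk.support_cons, SimpleGraph.Walk.support_concat]
    refine List.nodup_cons.2 ⟨?_, List.Nodup.append ?_ (List.nodup_singleton b) ?_⟩
    · intro hmem
      rcases List.mem_append.1 hmem with hm | hm
      · obtain ⟨k, h, hk, _, _⟩ := spineW_support (t - s) s t ht hst rfl a hm
        exact ha' ⟨k, h⟩ hk
      · exact hab (List.mem_singleton.1 hm)
    · exact (spineW_isPath (t - s) s t ht hst rfl).support_nodup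
    · intro x hx hy
      obtain ⟨k, h, hk, _, _⟩ := spineW_support (t - s) s t ht hst rfl x hx
      rw [List.mem_singleton] at hy
      exact hb' ⟨k, h⟩ ((hy.symm.trans hk) ▸ rfl)
  rw [dist_eq_of_path _ p hpath, hp]
  try dsimp only
  simp only [SimpleGraph.Walk.darts_cons, SimpleGraph.Walk.darts_concat,
    List.concat_eq_append, List.map_cons, List.map_append, List.map_nil,
    List.sum_cons, List.sum_append, List.sum_nil]
  try dsimp only
  rw [spineW_weight (t - s) s t ht hst rfl]
  ring
end Aux2
section Aux3
variable {n : ℕ}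

lemma U_adj_only (i : Fin (n - 1)) (b : CatVE n)
    (h : (catGraphE n).Adj (.inr (.inl i)) b) : b = .inl i := by
  obtain ⟨hne, h | h⟩ := h <;>
    rcases b with j | j | j | j <;> simp [catRelE] at h <;> simp [h]

lemma V_adj_only (i : Fin (n - 1)) (b : CatVE n)
    (h : (catGraphE n).Adj (.inr (.inr (.inl i))) b) : b = .inl i := by
  obtain ⟨hne, h | h⟩ := h <;>
    rcases b with j | j | j | j <;> simp [catRelE] at h <;> simp [h]

lemma W_adj_only (hn : 4 ≤ n) (b : CatVE n)
    (h : (catGraphE n).Adj (.inr (.inr (.inr ()))) b) :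
    b = .inl ⟨n / 2 - 1, by omega⟩ := by
  obtain ⟨hne, h | h⟩ := h <;>
    rcases b with j | j | j | j <;> simp [catRelE] at h
  · have : j.val = n / 2 - 1 := by omega
    simp [← this]
end Aux3
section Aux4
variable {n : ℕ}

lemma ordinary_adj_spine {a : CatVE n} {i : ℕ} {hi : i < n - 1}
    (ha : a = .inr (.inl ⟨i, hi⟩) ∨ a = .inr (.inr (.inl ⟨i, hi⟩))) :
    (catGraphE n).Adj a (.inl ⟨i, hi⟩) := by
  rcases ha with rfl | rfl
  · exact adj_U i hi
  · exact adj_V i hi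

lemma ordinary_wt {a : CatVE n} {i : ℕ} {hi : i < n - 1}
    (ha : a = .inr (.inl ⟨i, hi⟩) ∨ a = .inr (.inr (.inl ⟨i, hi⟩)))
    (x : CatVE n) (hx : ∀ y : Fin (n - 1), x = Sum.inl y) :
    True := trivial

lemma ordinary_not_spine {a : CatVE n} {i : ℕ} {hi : i < n - 1}
    (ha : a = .inr (.inl ⟨i, hi⟩) ∨ a = .inr (.inr (.inl ⟨i, hi⟩))) :
    ∀ x : Fin (n - 1), a ≠ Sum.inl x := by
  rcases ha with rfl | rfl <;> simp

lemma dist_UV (T : WTree (CatVE n)) (hg : T.g = catGraphE n) (hw : T.w = catWE n)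
    (a b : CatVE n) (i j : ℕ) (hi : i < n - 1) (hj : j < n - 1)
    (ha : a = .inr (.inl ⟨i, hi⟩) ∨ a = .inr (.inr (.inl ⟨i, hi⟩)))
    (hb : b = .inr (.inl ⟨j, hj⟩) ∨ b = .inr (.inr (.inl ⟨j, hj⟩)))
    (hab : a ≠ b) :
    T.dist a b = 2 * (n : ℝ) + 2 * |(i : ℝ) - (j : ℝ)| := by
  have hwa : ∀ (s : ℕ) (hs : s < n - 1), catWE n a (.inl ⟨s, hs⟩) = n := by
    intro s hs; rcases ha with rfl | rfl <;> rfl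
  have hwb : ∀ (s : ℕ) (hs : s < n - 1), catWE n (.inl ⟨s, hs⟩) b = n := by
    intro s hs; rcases hb with rfl | rfl <;> rfl
  have hwa2 : ∀ (s : ℕ) (hs : s < n - 1), catWE n (.inl ⟨s, hs⟩) a = n := by
    intro s hs; rcases ha with rfl | rfl <;> rfl
  have hwb2 : ∀ (s : ℕ) (hs : s < n - 1), catWE n b (.inl ⟨s, hs⟩) = n := by
    intro s hs; rcases hb with rfl | rfl <;> rfl
  rcases le_total i j with h | h
  · rw [dist_leaves T hg hw a b i j hi hj h (ordinary_adj_spine ha)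
      ((ordinary_adj_spine hb).symm) (ordinary_not_spine ha) (ordinary_not_spine hb) hab]
    rw [hwa, hwb, abs_of_nonpos (sub_nonpos.mpr (by exact_mod_cast h)), Nat.cast_sub h]
    push_cast
    ring
  · rw [wtree_dist_symm]
    rw [dist_leaves T hg hw b a j i hj hi h (ordinary_adj_spine hb)
      ((ordinary_adj_spine ha).symm) (ordinary_not_spine hb) (ordinary_not_spine ha) hab.symm]
    rw [hwb2, hwa2, abs_of_nonneg (sub_nonneg.mpr (by exact_mod_cast h)), Nat.cast_sub h]
    push_cast
    ring

lemma dist_UW (hn : 4 ≤ n) (T : WTree (CatVE n)) (hg : T.g = catGraphE n) (hw : T.w = catWE n)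
    (a : CatVE n) (i : ℕ) (hi : i < n - 1)
    (ha : a = .inr (.inl ⟨i, hi⟩) ∨ a = .inr (.inr (.inl ⟨i, hi⟩))) :
    T.dist a (.inr (.inr (.inr ()))) = (n : ℝ) + 1 + 2 * |(i : ℝ) - ((n / 2 - 1 : ℕ) : ℝ)| := by
  have hw0 : n / 2 - 1 < n - 1 := by omega
  have hab : a ≠ .inr (.inr (.inr ())) := by rcases ha with rfl | rfl <;> simp
  have hwa : ∀ (s : ℕ) (hs : s < n - 1), catWE n a (.inl ⟨s, hs⟩) = n := by
    intro s hs; rcases ha with rfl | rfl <;> rfl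
  have hWspine : ∀ (s : ℕ) (hs : s < n - 1),
      catWE n (Sum.inl ⟨s, hs⟩ : CatVE n) (.inr (.inr (.inr ()))) = 1 := by
    intro s hs; rfl
  have hWspine' : ∀ (s : ℕ) (hs : s < n - 1),
      catWE n (.inr (.inr (.inr ())) : CatVE n) (Sum.inl ⟨s, hs⟩) = 1 := by
    intro s hs; rfl
  have hWne : ∀ x : Fin (n - 1), (.inr (.inr (.inr ())) : CatVE n) ≠ Sum.inl x := by simp
  have hwa2 : ∀ (s : ℕ) (hs : s < n - 1), catWE n (.inl ⟨s, hs⟩) a = n := by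
    intro s hs; rcases ha with rfl | rfl <;> rfl
  rcases le_total i (n / 2 - 1) with h | h
  · rw [dist_leaves T hg hw a _ i (n / 2 - 1) hi hw0 h (ordinary_adj_spine ha)
      (adj_W hn hw0).symm (ordinary_not_spine ha) hWne hab]
    rw [hwa, hWspine, abs_of_nonpos (sub_nonpos.mpr (by exact_mod_cast h)), Nat.cast_sub h]
    push_cast
    ring
  · rw [wtree_dist_symm]
    rw [dist_leaves T hg hw _ a (n / 2 - 1) i hw0 hi h (adj_W hn hw0)
      ((ordinary_adj_spine ha).symm) hWne (ordinary_not_spine ha) hab.symm]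
    rw [hwa2, hWspine', abs_of_nonneg (sub_nonneg.mpr (by exact_mod_cast h)), Nat.cast_sub h]
    push_cast
    ring
end Aux4
section Aux5
variable {n : ℕ}

lemma fin2_cases (s : Fin 2) : s = 0 ∨ s = 1 := by omega

lemma abs_cast_nat (a b : ℕ) : |(a : ℝ) - (b : ℝ)| = ((max a b - min a b : ℕ) : ℝ) := by
  rcases le_total a b with h | h
  · rw [abs_of_nonpos (sub_nonpos.mpr (by exact_mod_cast h)), max_eq_right h, min_eq_left h,
      Nat.cast_sub h]
    ring
  · rw [abs_of_nonneg (sub_nonneg.mpr (by exact_mod_cast h)), max_eq_left h, min_eq_right h,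
      Nat.cast_sub h]

lemma sub_one_lt_of_four (hn : 4 ≤ n) : n - 1 < n := by omega

lemma leafMapE_inj (hn : 4 ≤ n) {p q : Fin n × Fin 2}
    (hp : p ≠ ((⟨n - 1, sub_one_lt_of_four hn⟩ : Fin n), (0 : Fin 2)))
    (hq : q ≠ ((⟨n - 1, sub_one_lt_of_four hn⟩ : Fin n), (0 : Fin 2)))
    (hpq : p ≠ q) : leafMapE n p ≠ leafMapE n q := by
  obtain ⟨i, s⟩ := p
  obtain ⟨j, t⟩ := q
  intro h
  apply hpq
  simp only [leafMapE] at h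
  split_ifs at h with h1 h2 h3 h4 h5 h6 h7 h8 <;>
    simp only [Sum.inr.injEq, Sum.inl.injEq, Fin.mk.injEq, reduceCtorEq] at h
  · exact Prod.ext (Fin.ext h) (by rw [h2, h4])
  · exact Prod.ext (Fin.ext h)
      (by rw [(fin2_cases s).resolve_left h2, (fin2_cases t).resolve_left h6])
  · have hi : i.val = n - 1 := by have := i.isLt; omega
    have hj : j.val = n - 1 := by have := j.isLt; omega
    have hs : s = 1 := by
      rcases fin2_cases s with rfl | rfl
      · exact (hp (Prod.ext (Fin.ext hi) rfl)).elim
      · rfl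
    have ht : t = 1 := by
      rcases fin2_cases t with rfl | rfl
      · exact (hq (Prod.ext (Fin.ext hj) rfl)).elim
      · rfl
    exact Prod.ext (Fin.ext (by rw [hi, hj])) (by rw [hs, ht])
end Aux5
theorem caterpillar_even_pcg (n : ℕ) (hn : 4 ≤ n) (hev : Even n)
    (T : WTree (CatVE n)) (hg : T.g = catGraphE n) (hw : T.w = catWE n) :
    IsPCGWith ((strongProdC2 n).induce {p | p ≠ ((⟨n - 1, by omega⟩ : Fin n), (0 : Fin 2))})
      T (fun p => leafMapE n p.1) (2 * (n : ℝ) - 2) (2 * (n : ℝ) + 2) := by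
  obtain ⟨m, hm⟩ := hev
  have hm2 : 2 ≤ m := by omega
  have hw0lt : n / 2 - 1 < n - 1 := by omega
  refine ⟨?_, ?_, ?_, ?_⟩
  · -- injectivity
    rintro ⟨p, hp⟩ ⟨q, hq⟩ h
    exact Subtype.ext (by_contra fun hc => leafMapE_inj hn hp hq hc h)
  · -- all images are leaves
    rintro ⟨⟨i, s⟩, hp⟩
    show T.IsLeaf (leafMapE n (i, s))
    simp only [leafMapE]
    split_ifs with h1 h2
    · refine ⟨Sum.inl ⟨i.val, h1⟩, ?_, fun y hy => ?_⟩
      · rw [hg]; exact adj_U i.val h1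
      · rw [hg] at hy; exact U_adj_only _ y hy
    · refine ⟨Sum.inl ⟨i.val, h1⟩, ?_, fun y hy => ?_⟩
      · rw [hg]; exact adj_V i.val h1
      · rw [hg] at hy; exact V_adj_only _ y hy
    · refine ⟨Sum.inl ⟨n / 2 - 1, hw0lt⟩, ?_, fun y hy => ?_⟩
      · rw [hg]; exact adj_W hn hw0lt
      · rw [hg] at hy; exact W_adj_only hn y hy
  · -- surjectivity onto leaves
    intro b hb
    rcases b with i | i | i | u
    · exfalso
      obtain ⟨y, _, hu⟩ := hb
      have hU := hu (Sum.inr (Sum.inl i)) (by rw [hg]; exact (adj_U i.val i.isLt).symm)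
      have hV := hu (Sum.inr (Sum.inr (Sum.inl i))) (by rw [hg]; exact (adj_V i.val i.isLt).symm)
      rw [← hV] at hU
      simp at hU
    · refine ⟨⟨(⟨i.val, by omega⟩, 0), ?_⟩, ?_⟩
      · simp only [Set.mem_setOf_eq, ne_eq, Prod.mk.injEq, Fin.mk.injEq, not_and]
        intro hc
        exact absurd hc (by have := i.isLt; omega)
      · show leafMapE n _ = _
        simp [leafMapE, i.isLt]
    · refine ⟨⟨(⟨i.val, by omega⟩, 1), ?_⟩, ?_⟩
      · simp only [Set.mem_setOf_eq, ne_eq, Prod.mk.injEq, Fin.mk.injEq, not_and]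
        intro hc
        exact absurd hc (by have := i.isLt; omega)
      · show leafMapE n _ = _
        simp [leafMapE, i.isLt]
    · refine ⟨⟨(⟨n - 1, by omega⟩, 1), ?_⟩, ?_⟩
      · simp only [Set.mem_setOf_eq, ne_eq, Prod.mk.injEq, not_and]
        intro _ hc
        exact absurd hc (by simp)
      · show leafMapE n _ = _
        simp [leafMapE]
  · -- the adjacency condition
    rintro ⟨⟨i, s⟩, hp⟩ ⟨⟨j, t⟩, hq⟩ huv
    have hp' : (i, s) ≠ ((⟨n - 1, by omega⟩ : Fin n), (0 : Fin 2)) := hp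
    have hq' : (j, t) ≠ ((⟨n - 1, by omega⟩ : Fin n), (0 : Fin 2)) := hq
    have hpq : (i, s) ≠ (j, t) := fun hc => huv (Subtype.ext hc)
    have hab : leafMapE n (i, s) ≠ leafMapE n (j, t) := leafMapE_inj hn hp' hq' hpq
    show ((i, s) ≠ (j, t) ∧ (i = j ∨ (i.val + 1) % n = j.val ∨ (j.val + 1) % n = i.val)) ↔
      (2 * (n : ℝ) - 2 ≤ T.dist (leafMapE n (i, s)) (leafMapE n (j, t)) ∧
        T.dist (leafMapE n (i, s)) (leafMapE n (j, t)) ≤ 2 * (n : ℝ) + 2)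
    by_cases hi : i.val < n - 1 <;> by_cases hj : j.val < n - 1
    · -- both ordinary
      have ha : leafMapE n (i, s) = Sum.inr (Sum.inl ⟨i.val, hi⟩) ∨
          leafMapE n (i, s) = Sum.inr (Sum.inr (Sum.inl ⟨i.val, hi⟩)) := by
        rcases fin2_cases s with rfl | rfl <;> simp [leafMapE, hi]
      have hb : leafMapE n (j, t) = Sum.inr (Sum.inl ⟨j.val, hj⟩) ∨
          leafMapE n (j, t) = Sum.inr (Sum.inr (Sum.inl ⟨j.val, hj⟩)) := by
        rcases fin2_cases t with rfl | rfl <;> simp [leafMapE, hj]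
      rw [dist_UV T hg hw _ _ i.val j.val hi hj ha hb hab, abs_cast_nat]
      set D := max i.val j.val - min i.val j.val with hD
      constructor
      · rintro ⟨-, hc⟩
        have hDle : D ≤ 1 := by
          rw [Nat.mod_eq_of_lt (by omega), Nat.mod_eq_of_lt (by omega), Fin.ext_iff] at hc
          omega
        have hDle' : (D : ℝ) ≤ 1 := by exact_mod_cast hDle
        have hD0 : (0 : ℝ) ≤ (D : ℝ) := Nat.cast_nonneg _
        constructor <;> linarith
      · rintro ⟨h1, h2⟩
        refine ⟨hpq, ?_⟩
        have hDle : D ≤ 1 := by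
          have : (D : ℝ) ≤ 1 := by linarith
          exact_mod_cast this
        rw [Nat.mod_eq_of_lt (by omega), Nat.mod_eq_of_lt (by omega), Fin.ext_iff]
        omega
    · -- i ordinary, j = n - 1
      have hjval : j.val = n - 1 := by have := j.isLt; omega
      have ha : leafMapE n (i, s) = Sum.inr (Sum.inl ⟨i.val, hi⟩) ∨
          leafMapE n (i, s) = Sum.inr (Sum.inr (Sum.inl ⟨i.val, hi⟩)) := by
        rcases fin2_cases s with rfl | rfl <;> simp [leafMapE, hi]
      have hb : leafMapE n (j, t) = Sum.inr (Sum.inr (Sum.inr ())) := by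
        simp [leafMapE, hj]
      rw [hb, dist_UW hn T hg hw _ i.val hi ha, abs_cast_nat]
      set D := max i.val (n / 2 - 1) - min i.val (n / 2 - 1) with hD
      have hij : ¬ i = j := fun hc => hj (by rw [Fin.ext_iff] at hc; omega)
      have hj1 : j.val + 1 = n := by omega
      rw [hj1, Nat.mod_self, Nat.mod_eq_of_lt (by omega)]
      constructor
      · rintro ⟨-, hc⟩
        have hDval : 2 * n ≤ n + 3 + 2 * D ∧ n + 1 + 2 * D ≤ 2 * n + 2 := by
          rcases hc with hc | hc | hc
          · exact absurd hc hij
          · omega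
          · omega
        refine ⟨?_, ?_⟩
        · have := hDval.1
          have h' : ((2 * n : ℕ) : ℝ) ≤ ((n + 3 + 2 * D : ℕ) : ℝ) := Nat.cast_le.2 this
          push_cast at h'
          linarith
        · have := hDval.2
          have h' : ((n + 1 + 2 * D : ℕ) : ℝ) ≤ ((2 * n + 2 : ℕ) : ℝ) := Nat.cast_le.2 this
          push_cast at h'
          linarith
      · rintro ⟨h1, h2⟩
        refine ⟨hpq, ?_⟩
        have h1' : 2 * n ≤ n + 3 + 2 * D := by
          have : ((2 * n : ℕ) : ℝ) ≤ ((n + 3 + 2 * D : ℕ) : ℝ) := by push_cast; linarith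
          exact_mod_cast this
        have h2' : n + 1 + 2 * D ≤ 2 * n + 2 := by
          have : ((n + 1 + 2 * D : ℕ) : ℝ) ≤ ((2 * n + 2 : ℕ) : ℝ) := by push_cast; linarith
          exact_mod_cast this
        right
        omega
    · -- j ordinary, i = n - 1
      have hival : i.val = n - 1 := by have := i.isLt; omega
      have hb : leafMapE n (j, t) = Sum.inr (Sum.inl ⟨j.val, hj⟩) ∨
          leafMapE n (j, t) = Sum.inr (Sum.inr (Sum.inl ⟨j.val, hj⟩)) := by
        rcases fin2_cases t with rfl | rfl <;> simp [leafMapE, hj]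
      have ha : leafMapE n (i, s) = Sum.inr (Sum.inr (Sum.inr ())) := by
        simp [leafMapE, hi]
      rw [ha, wtree_dist_symm, dist_UW hn T hg hw _ j.val hj hb, abs_cast_nat]
      set D := max j.val (n / 2 - 1) - min j.val (n / 2 - 1) with hD
      have hij : ¬ i = j := fun hc => hi (by rw [Fin.ext_iff] at hc; omega)
      have hi1 : i.val + 1 = n := by omega
      rw [hi1, Nat.mod_self, Nat.mod_eq_of_lt (by omega)]
      constructor
      · rintro ⟨-, hc⟩
        have hDval : 2 * n ≤ n + 3 + 2 * D ∧ n + 1 + 2 * D ≤ 2 * n + 2 := by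
          rcases hc with hc | hc | hc
          · exact absurd hc hij
          · omega
          · omega
        refine ⟨?_, ?_⟩
        · have := hDval.1
          have h' : ((2 * n : ℕ) : ℝ) ≤ ((n + 3 + 2 * D : ℕ) : ℝ) := Nat.cast_le.2 this
          push_cast at h'
          linarith
        · have := hDval.2
          have h' : ((n + 1 + 2 * D : ℕ) : ℝ) ≤ ((2 * n + 2 : ℕ) : ℝ) := Nat.cast_le.2 this
          push_cast at h'
          linarith
      · rintro ⟨h1, h2⟩
        refine ⟨hpq, ?_⟩
        have h1' : 2 * n ≤ n + 3 + 2 * D := by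
          have : ((2 * n : ℕ) : ℝ) ≤ ((n + 3 + 2 * D : ℕ) : ℝ) := by push_cast; linarith
          exact_mod_cast this
        have h2' : n + 1 + 2 * D ≤ 2 * n + 2 := by
          have : ((n + 1 + 2 * D : ℕ) : ℝ) ≤ ((2 * n + 2 : ℕ) : ℝ) := by push_cast; linarith
          exact_mod_cast this
        right
        omega
    · -- both are n - 1: impossible
      exfalso
      have hival : i.val = n - 1 := by have := i.isLt; omega
      have hjval : j.val = n - 1 := by have := j.isLt; omega
      have hs : s = 1 := by
        rcases fin2_cases s with rfl | rfl
        · exact absurd (Prod.ext (Fin.ext hival) rfl : (i, (0 : Fin 2)) = ((⟨n - 1, by omega⟩ : Fin n), 0)) hp'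
        · rfl
      have ht : t = 1 := by
        rcases fin2_cases t with rfl | rfl
        · exact absurd (Prod.ext (Fin.ext hjval) rfl : (j, (0 : Fin 2)) = ((⟨n - 1, by omega⟩ : Fin n), 0)) hq'
        · rfl
      exact hpq (Prod.ext (Fin.ext (hival.trans hjval.symm)) (by rw [hs, ht]))
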